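/- For every finite simple graph G with at least one edge, reg(G) ≤ Δ(G) + 1, where Δ(G) is the maximum degree of G. -/

import Mathlib

open SimpleGraph

variable {V : Type*}

/-- The number of edges of the edge set `F` incident with the vertex `v`. -/
noncomputable def edgeDeg (F : Set (Sym2 V)) (v : V) : ℕ := {e ∈ F | v ∈ e}.ncard

/-- The subgraph induced by the edge set `F` (on the vertices incident with edges of `F`)
is `r`-regular: every vertex incident with an edge of `F` lies on exactly `r` edges of `F`. -/
def IsRegularEdgeSet (F : Set (Sym2 V)) (r : ℕ) : Prop :=
  ∀ v : V, (∃ e ∈ F, v ∈ e) → edgeDeg F v = r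

/-- `P` is a partition of the edge set of `G` into `t` nonempty parts, each of which
induces a regular subgraph. -/
def IsRegularPartition (G : SimpleGraph V) {t : ℕ} (P : Fin t → Set (Sym2 V)) : Prop :=
  (∀ i, (P i).Nonempty) ∧ (∀ i j, i ≠ j → Disjoint (P i) (P j)) ∧
    (⋃ i, P i) = G.edgeSet ∧ ∀ i, ∃ r, IsRegularEdgeSet (P i) r

/-- The regular number of `G`: the minimum number of parts in a partition of the edge set of `G`
into nonempty subsets each of which induces a regular subgraph. -/
noncomputable def regNum (G : SimpleGraph V) : ℕ :=
  sInf {t | ∃ P : Fin t → Set (Sym2 V), IsRegularPartition G P}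

/-- `C` is a proper edge coloring of `G` with `n` colors: edges sharing a vertex get
distinct colors. -/
def IsProperEdgeColoring (G : SimpleGraph V) {n : ℕ} (C : Sym2 V → Fin n) : Prop :=
  ∀ e₁ ∈ G.edgeSet, ∀ e₂ ∈ G.edgeSet, e₁ ≠ e₂ → (∃ x, x ∈ e₁ ∧ x ∈ e₂) → C e₁ ≠ C e₂

/-- The edge chromatic number of `G`: the minimum number of colors of a proper edge coloring. -/
noncomputable def edgeChromNum (G : SimpleGraph V) : ℕ :=
  sInf {n | ∃ C : Sym2 V → Fin n, IsProperEdgeColoring G C}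


set_option linter.unusedSectionVars false

section RegAuxSection
open Finset
namespace RegAux
variable {V : Type*} [DecidableEq V]


variable {V : Type*} [DecidableEq V] {n : ℕ}

/-- `c` is a proper partial edge coloring of the edge finset `F`. -/
def ProperOn (F : Finset (Sym2 V)) (c : Sym2 V → Fin n) : Prop :=
  ∀ e₁ ∈ F, ∀ e₂ ∈ F, e₁ ≠ e₂ → (∃ v, v ∈ e₁ ∧ v ∈ e₂) → c e₁ ≠ c e₂

/-- colors used at a vertex. -/
def usedAt (F : Finset (Sym2 V)) (c : Sym2 V → Fin n) (v : V) : Finset (Fin n) :=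
  (F.filter (fun e => v ∈ e)).image c

lemma mem_usedAt {F : Finset (Sym2 V)} {c : Sym2 V → Fin n} {v : V} {d : Fin n} :
    d ∈ usedAt F c v ↔ ∃ e ∈ F, v ∈ e ∧ c e = d := by
  simp [usedAt, Finset.mem_image, Finset.mem_filter]
  tauto

lemma ProperOn.mono {F F' : Finset (Sym2 V)} {c : Sym2 V → Fin n} (h : ProperOn F c)
    (hsub : F' ⊆ F) : ProperOn F' c :=
  fun e₁ h₁ e₂ h₂ => h e₁ (hsub h₁) e₂ (hsub h₂)

lemma ProperOn.congr {F : Finset (Sym2 V)} {c c' : Sym2 V → Fin n} (h : ProperOn F c)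
    (hcc : ∀ e ∈ F, c' e = c e) : ProperOn F c' := by
  intro e₁ h₁ e₂ h₂ hne hsh
  rw [hcc e₁ h₁, hcc e₂ h₂]; exact h e₁ h₁ e₂ h₂ hne hsh

lemma properOn_insert {F : Finset (Sym2 V)} {c : Sym2 V → Fin n} {e : Sym2 V}
    (h : ProperOn F c) (hnew : ∀ f ∈ F, f ≠ e → (∃ v, v ∈ e ∧ v ∈ f) → c e ≠ c f) :
    ProperOn (insert e F) c := by
  intro e₁ h₁ e₂ h₂ hne hsh
  rcases Finset.mem_insert.1 h₁ with he₁ | he₁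
  · rcases Finset.mem_insert.1 h₂ with he₂ | he₂
    · exact absurd (he₁.trans he₂.symm) hne
    · subst he₁; exact hnew e₂ he₂ (Ne.symm hne) hsh
  · rcases Finset.mem_insert.1 h₂ with he₂ | he₂
    · subst he₂
      obtain ⟨v, hv1, hv2⟩ := hsh
      exact (hnew e₁ he₁ hne ⟨v, hv2, hv1⟩).symm
    · exact h e₁ he₁ e₂ he₂ hne hsh

lemma sym2_eq {x a b : V} (h : s(x,a) = s(x,b)) (ha : a ≠ x) : a = b := by
  rw [Sym2.eq_iff] at h
  rcases h with ⟨-, h⟩ | ⟨h, h'⟩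
  · exact h
  · exact absurd h' ha

/-- generic strengthening of chains using membership info. -/
lemma chain'_of_chain' {R S : V → V → Prop} :
    ∀ {l : List V}, List.Chain' R l → (∀ a ∈ l, ∀ b ∈ l.tail, R a b → S a b) → List.Chain' S l
  | [], _, _ => List.isChain_nil
  | [_], _, _ => List.isChain_singleton _
  | a :: b :: t, h, himp => by
    simp only [List.Chain'] at h ⊢
    rw [List.isChain_cons_cons] at h ⊢
    refine ⟨himp a (by simp) b (by simp) h.1, chain'_of_chain' h.2 ?_⟩
    intro a' ha' b' hb' hr
    exact himp a' (List.mem_cons_of_mem _ ha') b' (List.mem_cons_of_mem _ hb') hr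

/-- The fan rotation lemma: if `y₀ :: t` is a "fan" at `x` (the edge `x y₀` uncolored, the
edges `x z`, `z ∈ t`, colored, consecutive colors free at the previous fan vertex), and `d` is
free at both `x` and the last fan vertex, then the coloring can be extended to `s(x,y₀)`. -/
lemma rot (t : List V) : ∀ (F : Finset (Sym2 V)) (c : Sym2 V → Fin n) (x y₀ : V) (d : Fin n),
    ProperOn F c → (y₀ :: t).Nodup → x ∉ (y₀ :: t) →
    s(x, y₀) ∉ F → (∀ z ∈ t, s(x, z) ∈ F) →
    List.Chain' (fun a b => c s(x, b) ∉ usedAt F c a) (y₀ :: t) →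
    d ∉ usedAt F c x → d ∉ usedAt F c ((y₀ :: t).getLast (by simp)) →
    ∃ c' : Sym2 V → Fin n, ProperOn (insert s(x, y₀) F) c' := by
  induction t with
  | nil =>
    intro F c x y₀ d hc hnd hx h₀ _ _ hdx hdl
    refine ⟨Function.update c s(x,y₀) d, ?_⟩
    have hagree : ∀ e ∈ F, Function.update c s(x,y₀) d e = c e := by
      intro e he
      exact Function.update_of_ne (fun h => h₀ (by rwa [h] at he)) _ _
    refine properOn_insert (hc.congr hagree) ?_
    intro f hf hne hsh
    rw [hagree f hf, Function.update_self]
    obtain ⟨v, hv1, hv2⟩ := hsh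
    rcases Sym2.mem_iff.1 hv1 with rfl | rfl
    · exact fun h => hdx (mem_usedAt.2 ⟨f, hf, hv2, h.symm⟩)
    · exact fun h => hdl (mem_usedAt.2 ⟨f, hf, hv2, h.symm⟩)
  | cons y₁ t' ih =>
    intro F c x y₀ d hc hnd hx h₀ htl hch hdx hdl
    have hxy₀ : x ≠ y₀ := fun h => hx (h ▸ List.mem_cons_self)
    have hxy₁ : x ≠ y₁ := fun h => hx (h ▸ by simp)
    have hy₀y₁ : y₀ ≠ y₁ := by
      intro h; rw [List.nodup_cons] at hnd; exact hnd.1 (h ▸ by simp)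
    set e₀ := s(x, y₀) with he₀
    set e₁ := s(x, y₁) with he₁
    have he₁F : e₁ ∈ F := htl y₁ (by simp)
    have he₀e₁ : e₀ ≠ e₁ := fun h => hy₀y₁ (sym2_eq h (Ne.symm hxy₀))
    set F₁ := insert e₀ (F.erase e₁) with hF₁
    set c₁ := Function.update c e₀ (c e₁) with hc₁
    have hc₁agree : ∀ e, e ≠ e₀ → c₁ e = c e := fun e he => Function.update_of_ne he _ _
    have hc₁agreeF : ∀ e ∈ F, c₁ e = c e := fun e he => hc₁agree e (fun h => h₀ (by rwa [h] at he))
    -- membership in e₀ means x or y₀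
    have hmem₀ : ∀ v, v ∈ e₀ → v = x ∨ v = y₀ := fun v hv => Sym2.mem_iff.1 hv
    -- chain head: c e₁ free at y₀
    have hch1 : c e₁ ∉ usedAt F c y₀ := (List.isChain_cons_cons.1 hch).1
    have hchrest : List.Chain' (fun a b => c s(x, b) ∉ usedAt F c a) (y₁ :: t') :=
      (List.isChain_cons_cons.1 hch).2
    -- properness of c₁ on F₁
    have hprop₁ : ProperOn F₁ c₁ := by
      refine properOn_insert (ProperOn.congr (hc.mono (Finset.erase_subset _ _)) ?_) ?_
      · intro e he; exact hc₁agreeF e (Finset.mem_of_mem_erase he)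
      · intro f hf hne hsh
        have hfF : f ∈ F := Finset.mem_of_mem_erase hf
        have hfe₁ : f ≠ e₁ := Finset.ne_of_mem_erase hf
        rw [hc₁agreeF f hfF, hc₁, Function.update_self]
        obtain ⟨v, hv1, hv2⟩ := hsh
        rcases hmem₀ v hv1 with rfl | rfl
        · exact hc e₁ he₁F f hfF (Ne.symm hfe₁) ⟨v, by simp [he₁], hv2⟩
        · exact fun h => hch1 (mem_usedAt.2 ⟨f, hfF, hv2, h.symm⟩)
    -- auxiliary: usedAt for F₁/c₁ at vertices other than x, y₀ shrinks
    have husub : ∀ a, a ≠ x → a ≠ y₀ → usedAt F₁ c₁ a ⊆ usedAt F c a := by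
      intro a hax hay₀ γ hγ
      obtain ⟨e, he, hae, hce⟩ := mem_usedAt.1 hγ
      rcases Finset.mem_insert.1 he with rfl | he'
      · rcases hmem₀ a hae with h | h
        · exact absurd h hax
        · exact absurd h hay₀
      · have heF : e ∈ F := Finset.mem_of_mem_erase he'
        have : e ≠ e₀ := fun h => h₀ (by rwa [h] at heF)
        exact mem_usedAt.2 ⟨e, heF, hae, by rw [← hc₁agree e this]; exact hce⟩
    -- usedAt at x does not grow
    have husubx : usedAt F₁ c₁ x ⊆ usedAt F c x := by
      intro γ hγ
      obtain ⟨e, he, hae, hce⟩ := mem_usedAt.1 hγ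
      rcases Finset.mem_insert.1 he with rfl | he'
      · rw [hc₁, Function.update_self] at hce
        exact mem_usedAt.2 ⟨e₁, he₁F, by simp [he₁], hce⟩
      · have heF : e ∈ F := Finset.mem_of_mem_erase he'
        have : e ≠ e₀ := fun h => h₀ (by rwa [h] at heF)
        exact mem_usedAt.2 ⟨e, heF, hae, by rw [← hc₁agree e this]; exact hce⟩
    have hndtail : (y₁ :: t').Nodup := (List.nodup_cons.1 hnd).2
    have hy₀tail : y₀ ∉ (y₁ :: t') := (List.nodup_cons.1 hnd).1
    have hxtail : x ∉ (y₁ :: t') := fun h => hx (List.mem_cons_of_mem _ h)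
    -- apply the IH
    obtain ⟨c', hc'⟩ := ih F₁ c₁ x y₁ d hprop₁ hndtail hxtail
      (by
        intro h
        rcases Finset.mem_insert.1 h with h | h
        · exact he₀e₁ h.symm
        · exact (Finset.notMem_erase _ _) h)
      (by
        intro z hz
        have hzx : z ≠ x := fun h => hxtail (h ▸ List.mem_cons_of_mem _ hz)
        have hzy₁ : z ≠ y₁ := fun h => (List.nodup_cons.1 hndtail).1 (h ▸ hz)
        have : s(x,z) ≠ e₁ := fun h => hzy₁ (sym2_eq h hzx)
        exact Finset.mem_insert_of_mem (Finset.mem_erase.2 ⟨this, htl z (List.mem_cons_of_mem _ hz)⟩))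
      (by
        refine chain'_of_chain' hchrest ?_
        intro a ha b hb hr
        have hax : a ≠ x := fun h => hxtail (h ▸ ha)
        have hay₀ : a ≠ y₀ := fun h => hy₀tail (h ▸ ha)
        have hbx : b ≠ x := fun h => hxtail (h ▸ List.mem_cons_of_mem _ hb)
        have hby₀ : b ≠ y₀ := fun h => hy₀tail (h ▸ List.mem_cons_of_mem _ hb)
        have hbe : s(x,b) ≠ e₀ := fun h => hby₀ (sym2_eq h hbx)
        rw [hc₁agree _ hbe]
        exact fun h => hr (husub a hax hay₀ h))
      (fun h => hdx (husubx h))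
      (by
        have hlast : ((y₁ :: t').getLast (by simp)) ∈ (y₁ :: t') := List.getLast_mem _
        have hglx : ((y₁ :: t').getLast (by simp)) ≠ x := fun h => hxtail (h ▸ hlast)
        have hgly₀ : ((y₁ :: t').getLast (by simp)) ≠ y₀ := fun h => hy₀tail (h ▸ hlast)
        have heq : ((y₀ :: y₁ :: t').getLast (by simp)) = ((y₁ :: t').getLast (by simp)) :=
          List.getLast_cons (by simp)
        rw [heq] at hdl
        exact fun h => hdl (husub _ hglx hgly₀ h))
    refine ⟨c', ?_⟩
    have : insert e₁ F₁ = insert e₀ F := by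
      rw [hF₁, Finset.insert_comm, Finset.insert_erase he₁F]
    rwa [this] at hc'




lemma sym2_third {e : Sym2 V} {w₁ w₂ u : V} (h1 : w₁ ∈ e) (h2 : w₂ ∈ e) (hne : w₁ ≠ w₂)
    (hu : u ∈ e) (hu1 : u ≠ w₁) : u = w₂ := by
  induction e with
  | h a b =>
    rw [Sym2.mem_iff] at h1 h2 hu
    rcases h1 with rfl | rfl <;> rcases h2 with rfl | rfl <;> rcases hu with rfl | rfl <;> tauto

lemma card_filter_mem_sym2 {e : Sym2 V} (hd : ¬ e.IsDiag) {W : Finset V}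
    (hall : ∀ u ∈ e, u ∈ W) : #(W.filter (fun w => w ∈ e)) = 2 := by
  induction e with
  | h a b =>
    have hab : a ≠ b := by
      intro h; exact hd (by simp [h, Sym2.isDiag_iff_proj_eq])
    have : (W.filter (fun w => w ∈ s(a,b))) = {a, b} := by
      ext w
      simp only [Finset.mem_filter, Finset.mem_insert, Finset.mem_singleton, Sym2.mem_iff]
      constructor
      · rintro ⟨-, h⟩; exact h
      · rintro (rfl | rfl)
        · exact ⟨hall w (by simp), Or.inl rfl⟩
        · exact ⟨hall w (by simp), Or.inr rfl⟩
    rw [this, Finset.card_pair hab]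

/-- In a "max degree ≤ 2" edge set, one cannot have three distinct vertices of degree ≤ 1
in the same connected component. -/
lemma K7 [Fintype V] (H : Finset (Sym2 V)) (hdiag : ∀ e ∈ H, ¬ e.IsDiag)
    (hdeg2 : ∀ u : V, #(H.filter (fun e => u ∈ e)) ≤ 2)
    (x p z : V) (hxp : x ≠ p) (hxz : x ≠ z) (hpz : p ≠ z)
    (hdx : #(H.filter (fun e => x ∈ e)) ≤ 1)
    (hdp : #(H.filter (fun e => p ∈ e)) ≤ 1)
    (hdz : #(H.filter (fun e => z ∈ e)) ≤ 1)
    (hrp : (fromEdgeSet (↑H : Set (Sym2 V))).Reachable x p)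
    (hrz : (fromEdgeSet (↑H : Set (Sym2 V))).Reachable x z) : False := by
  classical
  set Γ := fromEdgeSet (↑H : Set (Sym2 V)) with hΓ
  set W : Finset V := univ.filter (fun w => Γ.Reachable x w) with hW
  set C : Finset (Sym2 V) := H.filter (fun e => ∃ u ∈ e, Γ.Reachable x u) with hC
  have hmemW : ∀ w, w ∈ W ↔ Γ.Reachable x w := by intro w; simp [hW]
  have hCH : C ⊆ H := Finset.filter_subset _ _
  -- each edge of C has both endpoints reachable
  have hends : ∀ e ∈ C, ∀ u ∈ e, Γ.Reachable x u := by
    intro e he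
    obtain ⟨heH, v, hv, hrv⟩ := Finset.mem_filter.1 he
    intro u hu
    have hvu : v = u ∨ Γ.Adj v u := by
      induction e with
      | h a b =>
        have hab : a ≠ b := fun h => hdiag _ heH (by simp [h, Sym2.isDiag_iff_proj_eq])
        have hadj : Γ.Adj a b := by
          rw [hΓ, fromEdgeSet_adj]; exact ⟨by exact_mod_cast heH, hab⟩
        rcases Sym2.mem_iff.1 hv with rfl | rfl <;> rcases Sym2.mem_iff.1 hu with rfl | rfl
        · exact Or.inl rfl
        · exact Or.inr hadj
        · exact Or.inr hadj.symm
        · exact Or.inl rfl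
    rcases hvu with rfl | hadj
    · exact hrv
    · exact hrv.trans hadj.reachable
  -- handshake: ∑_{w ∈ W} deg_C w = 2 * #C
  have handshake : ∑ w ∈ W, #(C.filter (fun e => w ∈ e)) = 2 * #C := by
    have h1 : ∀ w, #(C.filter (fun e => w ∈ e)) = ∑ e ∈ C, if w ∈ e then 1 else 0 := by
      intro w; rw [Finset.card_filter]
    simp_rw [h1]
    rw [Finset.sum_comm]
    have h2 : ∀ e ∈ C, (∑ w ∈ W, if w ∈ e then 1 else 0) = 2 := by
      intro e he
      rw [← Finset.card_filter]
      exact card_filter_mem_sym2 (hdiag e (hCH he))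
        (fun u hu => (hmemW u).2 (hends e he u hu))
    rw [Finset.sum_congr rfl h2, Finset.sum_const, smul_eq_mul, mul_comm]
  -- connectivity: #W ≤ #C + 1
  have hxW : x ∈ W := (hmemW x).2 (Reachable.refl x)
  have hconn : #W ≤ #C + 1 := by
    have hex : ∀ w ∈ W.erase x, ∃ e, e ∈ C ∧ w ∈ e ∧ ∃ u ∈ e, u ≠ w ∧ Γ.dist x u < Γ.dist x w := by
      intro w hw
      have hwx : w ≠ x := Finset.ne_of_mem_erase hw
      have hr : Γ.Reachable x w := (hmemW w).1 (Finset.mem_of_mem_erase hw)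
      obtain ⟨q, hq⟩ := (hr.symm).exists_walk_length_eq_dist
      have hpos : 0 < Γ.dist x w := hr.pos_dist_of_ne (Ne.symm hwx)
      have hdistq : q.length = Γ.dist x w := by rw [hq, SimpleGraph.dist_comm]
      cases q with
      | nil => exact absurd rfl hwx
      | cons hadj q' =>
        rename_i u
        refine ⟨s(w,u), ?_, by simp, u, by simp, ?_, ?_⟩
        · rw [hC, Finset.mem_filter]
          have hmem : s(w,u) ∈ (↑H : Set (Sym2 V)) := ((fromEdgeSet_adj _).1 hadj).1
          exact ⟨by exact_mod_cast hmem, w, by simp, hr⟩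
        · exact fun h => ((fromEdgeSet_adj _).1 hadj).2 (h.symm)
        · have h1 : Γ.dist x u ≤ q'.reverse.length := SimpleGraph.dist_le _
          rw [SimpleGraph.Walk.length_reverse] at h1
          simp only [SimpleGraph.Walk.length_cons] at hdistq
          omega
    have hinj : #(W.erase x) ≤ #C := by
      haveI : Inhabited (Sym2 V) := ⟨s(x,x)⟩
      set f : V → Sym2 V := fun w =>
        if h : ∃ e, e ∈ C ∧ w ∈ e ∧ ∃ u ∈ e, u ≠ w ∧ Γ.dist x u < Γ.dist x w
        then h.choose else default with hf
      have hfspec : ∀ w ∈ W.erase x, f w ∈ C ∧ w ∈ f w ∧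
          ∃ u ∈ f w, u ≠ w ∧ Γ.dist x u < Γ.dist x w := by
        intro w hw
        have h := hex w hw
        rw [hf]; simp only [dif_pos h]; exact h.choose_spec
      refine Finset.card_le_card_of_injOn f (fun w hw => (hfspec w hw).1) ?_
      intro w₁ hw₁ w₂ hw₂ heq
      by_contra hne
      obtain ⟨h1C, h1m, u₁, hu₁m, hu₁ne, hu₁lt⟩ := hfspec w₁ (Finset.mem_coe.1 hw₁)
      obtain ⟨h2C, h2m, u₂, hu₂m, hu₂ne, hu₂lt⟩ := hfspec w₂ (Finset.mem_coe.1 hw₂)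
      rw [heq] at h1m hu₁m
      have e₁ : u₁ = w₂ := sym2_third h1m h2m hne hu₁m hu₁ne
      have e₂ : u₂ = w₁ := sym2_third h2m h1m (Ne.symm hne) hu₂m hu₂ne
      rw [e₁] at hu₁lt; rw [e₂] at hu₂lt
      omega
    have := Finset.card_erase_of_mem hxW
    omega
  -- final counting
  set T : Finset V := {x, p, z} with hT
  have hTW : T ⊆ W := by
    intro w hw
    rw [hT] at hw
    simp only [Finset.mem_insert, Finset.mem_singleton] at hw
    rcases hw with rfl | rfl | rfl
    · exact hxW
    · exact (hmemW w).2 hrp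
    · exact (hmemW w).2 hrz
  have hcardT : #T = 3 := by
    rw [hT, Finset.card_insert_of_notMem (by simp [hxp, hxz]),
      Finset.card_insert_of_notMem (by simp [hpz]), Finset.card_singleton]
  have hsplit : ∑ w ∈ W \ T, #(C.filter (fun e => w ∈ e))
      + ∑ w ∈ T, #(C.filter (fun e => w ∈ e)) = 2 * #C := by
    rw [Finset.sum_sdiff hTW]; exact handshake
  have hsumT : ∑ w ∈ T, #(C.filter (fun e => w ∈ e)) ≤ 3 := by
    have : ∀ w ∈ T, #(C.filter (fun e => w ∈ e)) ≤ 1 := by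
      intro w hw
      have hsub : #(C.filter (fun e => w ∈ e)) ≤ #(H.filter (fun e => w ∈ e)) :=
        Finset.card_le_card (Finset.filter_subset_filter _ hCH)
      rw [hT] at hw
      simp only [Finset.mem_insert, Finset.mem_singleton] at hw
      rcases hw with rfl | rfl | rfl
      · omega
      · omega
      · omega
    calc ∑ w ∈ T, #(C.filter (fun e => w ∈ e)) ≤ ∑ _w ∈ T, 1 := Finset.sum_le_sum this
      _ = 3 := by rw [Finset.sum_const, hcardT]; simp
  have hsumWT : ∑ w ∈ W \ T, #(C.filter (fun e => w ∈ e)) ≤ 2 * (#W - 3) := by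
    calc ∑ w ∈ W \ T, #(C.filter (fun e => w ∈ e))
        ≤ ∑ w ∈ W \ T, 2 := Finset.sum_le_sum (fun w _ => le_trans
          (Finset.card_le_card (Finset.filter_subset_filter _ hCH)) (hdeg2 w))
      _ = 2 * (#W - 3) := by
          rw [Finset.sum_const, Finset.card_sdiff_of_subset hTW, hcardT]; ring
  have hWge : 3 ≤ #W := hcardT ▸ Finset.card_le_card hTW
  omega


/-- The graph of edges of `F` colored `α` or `β`. -/
def kGraph {n : ℕ} (F : Finset (Sym2 V)) (c : Sym2 V → Fin n) (α β : Fin n) : SimpleGraph V :=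
  fromEdgeSet {e : Sym2 V | e ∈ F ∧ (c e = α ∨ c e = β)}

/-- The Kempe chain flip: swapping the colors `α`, `β` on the connected component of `x`. -/
lemma kempe_flip [Fintype V] {n : ℕ} {F : Finset (Sym2 V)} {c : Sym2 V → Fin n}
    (hc : ProperOn F c) (hdiag : ∀ e ∈ F, ¬ e.IsDiag) {α β : Fin n} (hαβ : α ≠ β) (x : V)
    (hα : α ∉ usedAt F c x) :
    ∃ c' : Sym2 V → Fin n, ProperOn F c' ∧
      β ∉ usedAt F c' x ∧
      (∀ u, ¬ (kGraph F c α β).Reachable x u → usedAt F c' u = usedAt F c u) ∧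
      (∀ u, (kGraph F c α β).Reachable x u → β ∉ usedAt F c u → α ∉ usedAt F c' u) ∧
      (∀ γ : Fin n, γ ≠ α → γ ≠ β → ∀ u, (γ ∈ usedAt F c' u ↔ γ ∈ usedAt F c u)) ∧
      (∀ e ∈ F, c e ≠ α → c e ≠ β → c' e = c e) ∧
      (∀ e ∈ F, x ∈ e → c e = β → c' e = α) ∧
      (∀ p q : V, p ≠ q → p ≠ x → q ≠ x → β ∉ usedAt F c p → β ∉ usedAt F c q →
        ¬ ((kGraph F c α β).Reachable x p ∧ (kGraph F c α β).Reachable x q)) := by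
  classical
  set Hs : Finset (Sym2 V) := F.filter (fun e => c e = α ∨ c e = β) with hHs
  have hkg : kGraph F c α β = fromEdgeSet (↑Hs : Set (Sym2 V)) := by
    rw [kGraph, hHs]; congr 1; ext e; simp
  set Γ := kGraph F c α β with hΓ
  -- endpoints of component edges are reachable
  have hends : ∀ e ∈ Hs, (∃ u ∈ e, Γ.Reachable x u) → ∀ v ∈ e, Γ.Reachable x v := by
    intro e he ⟨u, hu, hru⟩ v hv
    have hdiag' : ¬ e.IsDiag := hdiag e (Finset.mem_filter.1 he).1
    have huv : u = v ∨ Γ.Adj u v := by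
      induction e with
      | h a b =>
        have hab : a ≠ b := fun h => hdiag' (by simp [h, Sym2.isDiag_iff_proj_eq])
        have hadj : Γ.Adj a b := by
          rw [hkg, fromEdgeSet_adj]
          exact ⟨by exact_mod_cast he, hab⟩
        rcases Sym2.mem_iff.1 hu with rfl | rfl <;> rcases Sym2.mem_iff.1 hv with rfl | rfl
        · exact Or.inl rfl
        · exact Or.inr hadj
        · exact Or.inr hadj.symm
        · exact Or.inl rfl
    rcases huv with rfl | hadj
    · exact hru
    · exact hru.trans hadj.reachable
  set comp : Finset (Sym2 V) := Hs.filter (fun e => ∃ u ∈ e, Γ.Reachable x u) with hcomp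
  have hcomp_mem : ∀ e, e ∈ comp ↔ (e ∈ F ∧ (c e = α ∨ c e = β)) ∧ ∃ u ∈ e, Γ.Reachable x u := by
    intro e; rw [hcomp, Finset.mem_filter, hHs, Finset.mem_filter]
  -- an H-edge with a reachable endpoint is in the component
  have hHcomp : ∀ e ∈ F, (c e = α ∨ c e = β) → ∀ u ∈ e, Γ.Reachable x u → e ∈ comp := by
    intro e heF hcol u hu hru
    exact (hcomp_mem e).2 ⟨⟨heF, hcol⟩, u, hu, hru⟩
  -- all endpoints of comp edges are reachable
  have hcomp_reach : ∀ e ∈ comp, ∀ u ∈ e, Γ.Reachable x u := by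
    intro e he u hu
    obtain ⟨⟨heF, hcol⟩, hex⟩ := (hcomp_mem e).1 he
    exact hends e (by rw [hHs, Finset.mem_filter]; exact ⟨heF, hcol⟩) hex u hu
  set c' : Sym2 V → Fin n := fun e => if e ∈ comp then (if c e = α then β else α) else c e
    with hc'
  have hc'comp : ∀ e ∈ comp, (c e = α ∧ c' e = β) ∨ (c e = β ∧ c' e = α) := by
    intro e he
    obtain ⟨⟨heF, hcol⟩, -⟩ := (hcomp_mem e).1 he
    rcases hcol with h | h
    · left; exact ⟨h, by rw [hc']; simp [he, h]⟩
    · right; refine ⟨h, ?_⟩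
      have : c e ≠ α := by rw [h]; exact Ne.symm hαβ
      rw [hc']; simp [he, this]
  have hc'ncomp : ∀ e, e ∉ comp → c' e = c e := by
    intro e he; rw [hc']; simp [he]
  have hc'out : ∀ e ∈ F, c e ≠ α → c e ≠ β → c' e = c e := by
    intro e heF h1 h2
    refine hc'ncomp e (fun hec => ?_)
    rcases hc'comp e hec with ⟨h, -⟩ | ⟨h, -⟩
    · exact h1 h
    · exact h2 h
  -- properness
  have hprop : ProperOn F c' := by
    intro e₁ h₁ e₂ h₂ hne ⟨v, hv₁, hv₂⟩
    by_cases hc₁ : e₁ ∈ comp <;> by_cases hc₂ : e₂ ∈ comp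
    · have hcc := hc e₁ h₁ e₂ h₂ hne ⟨v, hv₁, hv₂⟩
      rcases hc'comp e₁ hc₁ with ⟨ha₁, hb₁⟩ | ⟨ha₁, hb₁⟩ <;>
        rcases hc'comp e₂ hc₂ with ⟨ha₂, hb₂⟩ | ⟨ha₂, hb₂⟩ <;>
        rw [hb₁, hb₂]
      · rw [ha₁, ha₂] at hcc; exact absurd rfl hcc
      · exact Ne.symm hαβ
      · exact hαβ
      · rw [ha₁, ha₂] at hcc; exact absurd rfl hcc
    · -- e₂ not in comp: its color is not α, β
      have h2col : c e₂ ≠ α ∧ c e₂ ≠ β := by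
        constructor <;> intro h <;>
          exact hc₂ (hHcomp e₂ h₂ (by tauto) v hv₂ (hcomp_reach e₁ hc₁ v hv₁))
      rw [hc'ncomp e₂ hc₂]
      rcases hc'comp e₁ hc₁ with ⟨-, hb₁⟩ | ⟨-, hb₁⟩ <;> rw [hb₁]
      · exact fun h => h2col.2 h.symm
      · exact fun h => h2col.1 h.symm
    · have h1col : c e₁ ≠ α ∧ c e₁ ≠ β := by
        constructor <;> intro h <;>
          exact hc₁ (hHcomp e₁ h₁ (by tauto) v hv₁ (hcomp_reach e₂ hc₂ v hv₂))
      rw [hc'ncomp e₁ hc₁]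
      rcases hc'comp e₂ hc₂ with ⟨-, hb₂⟩ | ⟨-, hb₂⟩ <;> rw [hb₂]
      · exact fun h => h1col.2 h
      · exact fun h => h1col.1 h
    · rw [hc'ncomp e₁ hc₁, hc'ncomp e₂ hc₂]
      exact hc e₁ h₁ e₂ h₂ hne ⟨v, hv₁, hv₂⟩
  -- β not used at x after the flip
  have hβx : β ∉ usedAt F c' x := by
    intro h
    obtain ⟨e, heF, hxe, hce⟩ := mem_usedAt.1 h
    by_cases hec : e ∈ comp
    · rcases hc'comp e hec with ⟨ha, -⟩ | ⟨-, hb⟩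
      · exact hα (mem_usedAt.2 ⟨e, heF, hxe, ha⟩)
      · rw [hce] at hb; exact hαβ hb.symm
    · rw [hc'ncomp e hec] at hce
      exact hec (hHcomp e heF (Or.inr hce) x hxe (Reachable.refl x))
  -- untouched vertices keep their used sets
  have huntouched : ∀ u, ¬ Γ.Reachable x u → usedAt F c' u = usedAt F c u := by
    intro u hu
    have : ∀ e ∈ F, u ∈ e → c' e = c e := by
      intro e heF hue
      refine hc'ncomp e (fun hec => hu (hcomp_reach e hec u hue))
    ext γ
    constructor <;> intro h <;> obtain ⟨e, heF, hue, hce⟩ := mem_usedAt.1 h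
    · exact mem_usedAt.2 ⟨e, heF, hue, by rw [← this e heF hue]; exact hce⟩
    · exact mem_usedAt.2 ⟨e, heF, hue, by rw [this e heF hue]; exact hce⟩
  -- touched vertices missing β now miss α
  have htouched : ∀ u, Γ.Reachable x u → β ∉ usedAt F c u → α ∉ usedAt F c' u := by
    intro u hru hβu h
    obtain ⟨e, heF, hue, hce⟩ := mem_usedAt.1 h
    by_cases hec : e ∈ comp
    · rcases hc'comp e hec with ⟨-, hb⟩ | ⟨hb, -⟩
      · rw [hce] at hb; exact hαβ hb
      · exact hβu (mem_usedAt.2 ⟨e, heF, hue, hb⟩)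
    · rw [hc'ncomp e hec] at hce
      exact hec (hHcomp e heF (Or.inl hce) u hue hru)
  -- colors other than α, β are untouched everywhere
  have hother : ∀ γ : Fin n, γ ≠ α → γ ≠ β → ∀ u, (γ ∈ usedAt F c' u ↔ γ ∈ usedAt F c u) := by
    intro γ h1 h2 u
    have key : ∀ e ∈ F, (c' e = γ ↔ c e = γ) := by
      intro e heF
      by_cases hec : e ∈ comp
      · rcases hc'comp e hec with ⟨ha, hb⟩ | ⟨ha, hb⟩ <;> rw [ha, hb] <;>
          exact ⟨fun h => absurd h.symm (by tauto), fun h => absurd h.symm (by tauto)⟩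
      · rw [hc'ncomp e hec]
    constructor <;> intro h <;> obtain ⟨e, heF, hue, hce⟩ := mem_usedAt.1 h
    · exact mem_usedAt.2 ⟨e, heF, hue, (key e heF).1 hce⟩
    · exact mem_usedAt.2 ⟨e, heF, hue, (key e heF).2 hce⟩
  -- β-colored edges at x become α
  have hxβα : ∀ e ∈ F, x ∈ e → c e = β → c' e = α := by
    intro e heF hxe hce
    have hec : e ∈ comp := hHcomp e heF (Or.inr hce) x hxe (Reachable.refl x)
    rcases hc'comp e hec with ⟨ha, -⟩ | ⟨-, hb⟩
    · rw [hce] at ha; exact absurd ha.symm hαβ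
    · exact hb
  -- at most one of two β-missing vertices is in the component of x
  have hK7 : ∀ p q : V, p ≠ q → p ≠ x → q ≠ x → β ∉ usedAt F c p → β ∉ usedAt F c q →
      ¬ (Γ.Reachable x p ∧ Γ.Reachable x q) := by
    rintro p q hpq hpx hqx hβp hβq ⟨hrp, hrq⟩
    -- degree bounds in Hs
    have hdeg : ∀ (u : V) (T : Finset (Fin n)), (∀ e ∈ F, u ∈ e → (c e = α ∨ c e = β) →
        c e ∈ T) → #(Hs.filter (fun e => u ∈ e)) ≤ #T := by
      intro u T hT
      refine Finset.card_le_card_of_injOn c ?_ ?_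
      · intro e he
        rw [Finset.mem_coe, Finset.mem_filter, hHs, Finset.mem_filter] at he
        exact hT e he.1.1 he.2 he.1.2
      · intro e₁ h₁ e₂ h₂ hne
        simp only [Finset.coe_filter, Set.mem_setOf_eq, hHs, Finset.mem_filter] at h₁ h₂
        by_contra hne'
        exact hc e₁ h₁.1.1 e₂ h₂.1.1 hne' ⟨u, h₁.2, h₂.2⟩ hne
    have hdeg2 : ∀ u : V, #(Hs.filter (fun e => u ∈ e)) ≤ 2 := by
      intro u
      have := hdeg u {α, β} (fun e _ _ h => by
        simp only [Finset.mem_insert, Finset.mem_singleton]; exact h)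
      calc #(Hs.filter (fun e => u ∈ e)) ≤ #({α, β} : Finset (Fin n)) := this
        _ ≤ 2 := Finset.card_insert_le _ _ |>.trans (by simp)
    have hd1 : ∀ u : V, β ∉ usedAt F c u → #(Hs.filter (fun e => u ∈ e)) ≤ 1 := by
      intro u hβu
      have := hdeg u {α} (fun e heF hue h => by
        rcases h with h | h
        · simp [h]
        · exact absurd (mem_usedAt.2 ⟨e, heF, hue, h⟩) hβu)
      simpa using this
    have hd1x : #(Hs.filter (fun e => x ∈ e)) ≤ 1 := by
      have := hdeg x {β} (fun e heF hxe h => by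
        rcases h with h | h
        · exact absurd (mem_usedAt.2 ⟨e, heF, hxe, h⟩) hα
        · simp [h])
      simpa using this
    have hdiagHs : ∀ e ∈ Hs, ¬ e.IsDiag := by
      intro e he
      rw [hHs, Finset.mem_filter] at he
      exact hdiag e he.1
    rw [hkg] at hrp hrq
    exact K7 Hs hdiagHs hdeg2 x p q (Ne.symm hpx) (Ne.symm hqx) hpq hd1x (hd1 p hβp)
      (hd1 q hβq) hrp hrq
  exact ⟨c', hprop, hβx, huntouched, htouched, hother, hc'out, hxβα, hK7⟩

lemma exists_pred {w : α} : ∀ {l : List α}, w ∈ l.tail → ∃ l₁ p l₂, l = l₁ ++ p :: w :: l₂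
  | [], h => by simp at h
  | [a], h => by simp at h
  | a :: b :: t, h => by
    simp only [List.tail_cons] at h
    rcases List.mem_cons.1 h with rfl | h'
    · exact ⟨[], a, t, rfl⟩
    · obtain ⟨l₁, p, l₂, heq⟩ := exists_pred (l := b :: t) (by simpa using h')
      exact ⟨a :: l₁, p, l₂, by rw [List.cons_append, ← heq]⟩

lemma exists_free [Fintype V] {G : SimpleGraph V} [DecidableRel G.Adj]
    {F : Finset (Sym2 V)} (hF : (↑F : Set (Sym2 V)) ⊆ G.edgeSet)
    (c : Sym2 V → Fin (G.maxDegree + 1)) (v : V) :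
    ∃ d : Fin (G.maxDegree + 1), d ∉ usedAt F c v := by
  have hsub : F.filter (fun e => v ∈ e) ⊆ G.incidenceFinset v := by
    intro e he
    rw [Finset.mem_filter] at he
    rw [SimpleGraph.mem_incidenceFinset]
    exact ⟨hF he.1, he.2⟩
  have hcard : #(usedAt F c v) ≤ G.maxDegree := by
    calc #(usedAt F c v) ≤ #(F.filter (fun e => v ∈ e)) := Finset.card_image_le
      _ ≤ #(G.incidenceFinset v) := Finset.card_le_card hsub
      _ = G.degree v := G.card_incidenceFinset_eq_degree v
      _ ≤ G.maxDegree := G.degree_le_maxDegree v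
  by_contra h
  push_neg at h
  have : (Finset.univ : Finset (Fin (G.maxDegree + 1))) ⊆ usedAt F c v := fun d _ => h d
  have := Finset.card_le_card this
  rw [Finset.card_univ, Fintype.card_fin] at this
  omega

/-- Core of Vizing's theorem: a proper partial coloring can be extended to one more edge. -/
lemma extend [Fintype V] {G : SimpleGraph V} [DecidableRel G.Adj]
    {F : Finset (Sym2 V)} (hF : (↑F : Set (Sym2 V)) ⊆ G.edgeSet)
    {c : Sym2 V → Fin (G.maxDegree + 1)} (hc : ProperOn F c) {x y : V}
    (hxy : G.Adj x y) (he : s(x,y) ∉ F) :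
    ∃ c' : Sym2 V → Fin (G.maxDegree + 1), ProperOn (insert s(x,y) F) c' := by
  classical
  have hdiagF : ∀ e ∈ F, ¬ e.IsDiag := fun e heF => G.not_isDiag_of_mem_edgeSet (hF heF)
  have hne_of_edge : ∀ z : V, s(x,z) ∈ F → x ≠ z := by
    intro z hz h
    exact hdiagF _ hz (by rw [← h]; simp [Sym2.isDiag_iff_proj_eq])
  -- fans
  set R : V → V → Prop := fun a b => c s(x,b) ∉ usedAt F c a with hR
  set isFan : List V → Prop := fun l => l.Nodup ∧ x ∉ l ∧ (∀ z ∈ l.tail, s(x,z) ∈ F) ∧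
    List.Chain' R l ∧ l.head? = some y with hisFan
  have hfan0 : isFan [y] := by
    refine ⟨by simp, by simp [hxy.ne], by simp, List.isChain_singleton y, rfl⟩
  set S : Set ℕ := {k | ∃ l, isFan l ∧ l.length = k} with hS
  have hSne : S.Nonempty := ⟨1, [y], hfan0, rfl⟩
  have hSbdd : BddAbove S := by
    refine ⟨Fintype.card V, ?_⟩
    rintro k ⟨l, hl, rfl⟩
    exact hl.1.length_le_card
  obtain ⟨l, hfanl, hlen⟩ := Nat.sSup_mem hSne hSbdd
  obtain ⟨hnd, hxl, htl, hch, hhead⟩ := hfanl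
  -- l = y :: t
  obtain ⟨t, rfl⟩ : ∃ t, l = y :: t := by
    cases l with
    | nil => simp at hhead
    | cons a t => exact ⟨t, by rw [(by simpa using hhead : a = y)]⟩
  have hl0 : y :: t ≠ [] := by simp
  set zl : V := (y :: t).getLast hl0 with hzl
  have hzl_mem : zl ∈ y :: t := List.getLast_mem hl0
  -- maximality
  have hmax : ∀ w, s(x,w) ∈ F → w ∉ y :: t → c s(x,w) ∈ usedAt F c zl := by
    intro w hwF hwl
    by_contra hfree
    have hfan' : isFan ((y :: t) ++ [w]) := by
      refine ⟨List.Nodup.append hnd (by simp) (by simp [List.disjoint_singleton, hwl]), ?_, ?_, ?_, ?_⟩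
      · simp only [List.mem_append, List.mem_singleton]
        rintro (h | h)
        · exact hxl h
        · exact hne_of_edge w hwF h
      · intro z hz
        rw [List.cons_append, List.tail_cons] at hz
        rcases List.mem_append.1 hz with h | h
        · exact htl z h
        · rw [List.mem_singleton.1 h]; exact hwF
      · simp only [List.Chain']
        rw [List.isChain_append]
        refine ⟨hch, List.isChain_singleton w, ?_⟩
        intro a ha b hb
        rw [List.getLast?_eq_getLast hl0, Option.mem_def, Option.some_inj] at ha
        simp only [List.head?_cons, Option.mem_def, Option.some_inj] at hb
        subst ha
        subst hb
        exact hfree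
      · simp
    have : ((y :: t) ++ [w]).length ∈ S := ⟨_, hfan', rfl⟩
    have hle := le_csSup hSbdd this
    simp only [List.length_append, List.length_singleton, hlen] at hle
    omega
  obtain ⟨α, hα⟩ := exists_free hF c x
  obtain ⟨β, hβ⟩ := exists_free hF c zl
  have htl' : ∀ z ∈ t, s(x,z) ∈ F := by simpa using htl
  by_cases hβx : β ∉ usedAt F c x
  · exact rot t F c x y β hc hnd hxl he htl' hch hβx hβ
  · push_neg at hβx
    obtain ⟨e₁, he₁F, hxe₁, hce₁⟩ := mem_usedAt.1 hβx
    obtain ⟨w, rfl⟩ : ∃ w, e₁ = s(x, w) := Sym2.mem_iff_exists.1 hxe₁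
    have hxw : x ≠ w := hne_of_edge w he₁F
    have hαβ : α ≠ β := fun h => hα (h ▸ hβx)
    have hwl : w ∈ y :: t := by
      by_contra hwl
      exact hβ (by rw [← hce₁]; exact hmax w he₁F hwl)
    have hwy : w ≠ y := by rintro rfl; exact he he₁F
    have hwt : w ∈ t := by
      rcases List.mem_cons.1 hwl with h | h
      · exact absurd h hwy
      · exact h
    obtain ⟨l₁, p, l₂, hdec⟩ := exists_pred (l := y :: t) (by simpa using hwt)
    have hassoc : y :: t = (l₁ ++ [p]) ++ w :: l₂ := by rw [hdec]; simp
    set lp := l₁ ++ [p] with hlp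
    have hlpne : lp ≠ [] := by simp [hlp]
    have hndall : lp.Nodup ∧ (w :: l₂).Nodup ∧ lp.Disjoint (w :: l₂) := by
      have h := hnd
      rw [hassoc, List.nodup_append'] at h
      exact h
    have hndlp : lp.Nodup := hndall.1
    have hwlp : w ∉ lp := fun h => hndall.2.2 h (by simp)
    have hwl₂ : w ∉ l₂ := by
      have := hndall.2.1
      rw [List.nodup_cons] at this
      exact this.1
    have hchsplit := List.isChain_append.1 (by rw [hassoc] at hch; exact hch)
    have hchlp : List.Chain' R lp := hchsplit.1
    have hchw : List.Chain' R (w :: l₂) := hchsplit.2.1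
    have hlastlp : lp.getLast? = some p := by rw [hlp, List.getLast?_concat]
    have hlink : R p w := hchsplit.2.2 p (by rw [hlastlp]; rfl) w rfl
    have hβp : β ∉ usedAt F c p := by rw [← hce₁]; exact hlink
    -- the prefix fan starts with y
    obtain ⟨t₁, hlpt⟩ : ∃ t₁, lp = y :: t₁ := by
      rw [hlp]
      cases hl₁ : l₁ with
      | nil =>
        have hyp : y = p := by
          rw [hl₁] at hdec
          simpa using congrArg List.head? hdec
        exact ⟨[], by simp [hyp]⟩
      | cons a l₁' =>
        have hya : y = a := by
          rw [hl₁] at hdec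
          simpa using congrArg List.head? hdec
        exact ⟨l₁' ++ [p], by rw [List.cons_append, hya]⟩
    have het : t = t₁ ++ w :: l₂ := by
      have h2 : y :: t = y :: (t₁ ++ w :: l₂) := by
        rw [hassoc, hlpt, List.cons_append]
      simpa using congrArg List.tail h2
    have ht₁sub : ∀ b ∈ t₁, b ∈ t := by
      intro b hb; rw [het]; exact List.mem_append_left _ hb
    have hl₂sub : ∀ b ∈ l₂, b ∈ t := by
      intro b hb; rw [het]; exact List.mem_append_right _ (by simp [hb])
    have hmeml : ∀ b ∈ lp, b ∈ y :: t := by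
      intro b hb; rw [hassoc]; exact List.mem_append_left _ hb
    have hpx : p ≠ x := fun h => hxl (h ▸ hmeml p (by simp [hlp]))
    have hzx : zl ≠ x := fun h => hxl (h ▸ hzl_mem)
    -- Kempe chain flip
    obtain ⟨c', hprop', hβx', huntouch, htouch, hother, hout, hxβα, hK7⟩ :=
      kempe_flip hc hdiagF hαβ x hα
    -- colors of non-special fan edges avoid α, β
    have hcolb : ∀ b, b ∈ t → b ≠ w → c s(x,b) ≠ α ∧ c s(x,b) ≠ β := by
      intro b hb hbw
      have hbF : s(x,b) ∈ F := htl' b hb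
      constructor
      · intro h; exact hα (mem_usedAt.2 ⟨_, hbF, by simp, h⟩)
      · intro h
        have heq : s(x,b) = s(x,w) := by
          by_contra hne'
          exact hc _ hbF _ he₁F hne' ⟨x, by simp, by simp⟩ (by rw [h, hce₁])
        exact hbw (sym2_eq heq (hne_of_edge b hbF).symm)
    -- transferring chains to the flipped coloring
    have hseg : ∀ m : List V, (∀ b ∈ m.tail, b ∈ t ∧ b ≠ w) → List.Chain' R m →
        List.Chain' (fun a b => c' s(x,b) ∉ usedAt F c' a) m := by
      intro m hm hchm
      refine chain'_of_chain' hchm ?_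
      intro a _ b hb hr
      obtain ⟨hb1, hb2⟩ := hm b hb
      obtain ⟨hcb1, hcb2⟩ := hcolb b hb1 hb2
      rw [hout _ (htl' b hb1) hcb1 hcb2]
      intro hmem
      exact hr ((hother _ hcb1 hcb2 a).1 hmem)
    by_cases hreach : (kGraph F c α β).Reachable x p
    · -- Plan B : p is on the Kempe chain, so the last fan vertex is not
      have hzlreach : ¬ (kGraph F c α β).Reachable x zl := by
        intro hr
        have hzlw : zl ∈ w :: l₂ := by
          have h2 : (y :: t).getLast? = some zl := List.getLast?_eq_getLast hl0
          have h3 : (w :: l₂).getLast? = some ((w :: l₂).getLast (by simp)) :=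
            List.getLast?_eq_getLast (by simp)
          have h1 : (y :: t).getLast? = (w :: l₂).getLast? := by
            rw [hassoc, List.getLast?_append, h3]; rfl
          rw [h2, h3] at h1
          rw [Option.some_inj.1 h1]
          exact List.getLast_mem _
        have hplp : p ∈ lp := by simp [hlp]
        have hpzl : p ≠ zl := by
          intro h
          exact hndall.2.2 hplp (by rw [h]; exact hzlw)
        exact hK7 p zl hpzl hpx hzx hβp hβ ⟨hreach, hr⟩
      have hch' : List.Chain' (fun a b => c' s(x,b) ∉ usedAt F c' a) (y :: t) := by
        simp only [List.Chain']
        rw [hassoc, List.isChain_append]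
        refine ⟨hseg lp (fun b hb => ?_) hchlp, hseg (w :: l₂) (fun b hb => ?_) hchw, ?_⟩
        · have hbt₁ : b ∈ t₁ := by
            rw [hlpt] at hb
            simpa using hb
          exact ⟨ht₁sub b hbt₁, fun h => hwlp (h ▸ (by rw [hlpt]; exact List.mem_cons_of_mem _ hbt₁))⟩
        · simp only [List.tail_cons] at hb
          exact ⟨hl₂sub b hb, fun h => hwl₂ (h ▸ hb)⟩
        · intro a ha b hb
          rw [hlastlp] at ha
          rw [Option.mem_def, Option.some_inj] at ha
          simp only [List.head?_cons, Option.mem_def, Option.some_inj] at hb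
          subst ha; subst hb
          have hce₁' : c' s(x,w) = α := hxβα _ he₁F (by simp) hce₁
          rw [hce₁']
          exact htouch p hreach hβp
      have hβzl' : β ∉ usedAt F c' ((y :: t).getLast (by simp)) := by
        rw [huntouch zl hzlreach]
        exact hβ
      exact rot t F c' x y β hprop' hnd hxl he htl' hch' hβx' hβzl'
    · -- Plan A : rotate only the prefix fan ending at p
      have husedp : usedAt F c' p = usedAt F c p := huntouch p hreach
      have hndyt₁ : (y :: t₁).Nodup := hlpt ▸ hndlp
      have hxyt₁ : x ∉ y :: t₁ := fun h => hxl (hmeml x (hlpt ▸ h))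
      have htlt₁ : ∀ z ∈ t₁, s(x,z) ∈ F := fun z hz => htl' z (ht₁sub z hz)
      have hcht₁ : List.Chain' (fun a b => c' s(x,b) ∉ usedAt F c' a) (y :: t₁) := by
        have := hseg lp (fun b hb => by
          have hbt₁ : b ∈ t₁ := by rw [hlpt] at hb; simpa using hb
          exact ⟨ht₁sub b hbt₁,
            fun h => hwlp (h ▸ (by rw [hlpt]; exact List.mem_cons_of_mem _ hbt₁))⟩) hchlp
        rw [hlpt] at this
        exact this
      have hlastt₁ : ((y :: t₁).getLast (by simp)) = p := by
        have h1 : (y :: t₁).getLast? = some p := by rw [← hlpt]; exact hlastlp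
        rw [List.getLast?_eq_getLast (by simp)] at h1
        exact Option.some_inj.1 h1
      have hβp' : β ∉ usedAt F c' ((y :: t₁).getLast (by simp)) := by
        rw [hlastt₁, husedp]
        exact hβp
      exact rot t₁ F c' x y β hprop' hndyt₁ hxyt₁ he htlt₁ hcht₁ hβx' hβp'

/-- Vizing's theorem (partial-coloring form): any finset of edges of `G` has a proper
edge coloring with `Δ(G) + 1` colors. -/
lemma vizing [Fintype V] (G : SimpleGraph V) [DecidableRel G.Adj] :
    ∀ F : Finset (Sym2 V), (↑F : Set (Sym2 V)) ⊆ G.edgeSet →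
      ∃ c : Sym2 V → Fin (G.maxDegree + 1), ProperOn F c := by
  intro F
  induction F using Finset.induction_on with
  | empty =>
    intro _
    exact ⟨fun _ => 0, fun e he => absurd he (by simp)⟩
  | @insert a s ha ih =>
    intro hsub
    have hs : (↑s : Set (Sym2 V)) ⊆ G.edgeSet := by
      intro e he
      exact hsub (by simp [he])
    obtain ⟨c, hc⟩ := ih hs
    have haE : a ∈ G.edgeSet := hsub (by simp)
    revert ha haE
    induction a using Sym2.ind with
    | _ x y =>
      intro ha haE
      exact extend hs hc (G.mem_edgeSet.1 haE) ha

end RegAux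

theorem regNum_le_maxDegree_add_one' [Fintype V] (G : SimpleGraph V) [DecidableRel G.Adj]
    (hG : G.edgeSet.Nonempty) : regNum G ≤ G.maxDegree + 1 := by
  classical
  obtain ⟨c, hc⟩ := RegAux.vizing G G.edgeFinset (by simp)
  set U : Finset (Fin (G.maxDegree + 1)) := G.edgeFinset.image c with hU
  set P : Fin (#U) → Set (Sym2 V) :=
    fun i => {e | e ∈ G.edgeSet ∧ c e = (U.equivFin.symm i : Fin (G.maxDegree + 1))} with hP
  have hpart : IsRegularPartition G P := by
    refine ⟨?_, ?_, ?_, ?_⟩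
    · -- nonempty
      intro i
      obtain ⟨d, hd⟩ : ∃ d : U, U.equivFin.symm i = d := ⟨_, rfl⟩
      obtain ⟨e, heF, hce⟩ := Finset.mem_image.1 d.2
      exact ⟨e, by
        rw [hP]
        refine ⟨SimpleGraph.mem_edgeFinset.1 heF, ?_⟩
        rw [hd, hce]⟩
    · -- pairwise disjoint
      intro i j hij
      rw [Set.disjoint_left]
      rintro e ⟨-, hei⟩ ⟨-, hej⟩
      apply hij
      have : (U.equivFin.symm i : Fin (G.maxDegree + 1)) = (U.equivFin.symm j : Fin _) := by
        rw [← hei, ← hej]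
      exact U.equivFin.symm.injective (Subtype.coe_injective this)
    · -- union is the edge set
      ext e
      simp only [Set.mem_iUnion]
      constructor
      · rintro ⟨i, he, -⟩
        exact he
      · intro he
        have hceU : c e ∈ U := Finset.mem_image.2 ⟨e, SimpleGraph.mem_edgeFinset.2 he, rfl⟩
        refine ⟨U.equivFin ⟨c e, hceU⟩, he, ?_⟩
        rw [Equiv.symm_apply_apply]
    · -- each part is 1-regular
      intro i
      refine ⟨1, ?_⟩
      rintro v ⟨e, heP, hve⟩
      have hkey : {f ∈ P i | v ∈ f} = {e} := by
        ext f
        simp only [Set.mem_setOf_eq, Set.mem_singleton_iff]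
        constructor
        · rintro ⟨⟨hfE, hfc⟩, hvf⟩
          by_contra hne
          exact hc f (SimpleGraph.mem_edgeFinset.2 hfE) e
            (SimpleGraph.mem_edgeFinset.2 heP.1) hne ⟨v, hvf, hve⟩
            (by rw [hfc, heP.2])
        · rintro rfl
          exact ⟨heP, hve⟩
      rw [edgeDeg, hkey, Set.ncard_singleton]
  have h1 : regNum G ≤ #U := Nat.sInf_le ⟨P, hpart⟩
  have h2 : #U ≤ G.maxDegree + 1 := by
    calc #U ≤ Fintype.card (Fin (G.maxDegree + 1)) := Finset.card_le_univ U
      _ = G.maxDegree + 1 := Fintype.card_fin _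
  omega

end RegAuxSection

/-- for every finite simple graph with at least one edge,
the regular number is at most the maximum degree plus one. -/
theorem regNum_le_maxDegree_add_one [Fintype V] (G : SimpleGraph V) [DecidableRel G.Adj]
    (hG : G.edgeSet.Nonempty) : regNum G ≤ G.maxDegree + 1 := by
  exact regNum_le_maxDegree_add_one' G hG
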